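/- Let G be a group acting on a set X. A G-equivariant map τ : X → X is a fixing elementary collapsing if and only if there exist x, y ∈ X with G_x ⊆ G_y and Gx ≠ Gy such that τ = [x↦y]. -/
import Mathlib


open Classical

/-- The map `[x↦y]` sending `g • x` to `g • y` for every `g ∈ G` and fixing all
elements outside the orbit of `x` (well-defined when `G_x ≤ G_y`). -/
noncomputable def collapseMap (G : Type*) [Group G] {X : Type*} [MulAction G X]
    (x y : X) : X → X := fun z =>
  if h : z ∈ MulAction.orbit G x then (MulAction.mem_orbit_iff.mp h).choose • y else z

/-- `τ` is a fixing elementary collapsing: `τ` is `G`-equivariant and there are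
`x, y ∈ X` with `Gx ≠ Gy` such that
`ker τ = Δ ∪ {(g·x,g·y),(g·y,g·x) : g ∈ G} ∪ {(g·x,h·x) : h⁻¹g ∈ G_y}` and
`Fix(τ) = X ∖ Gx`. -/
def IsFixingElemCollapsing (G : Type*) [Group G] {X : Type*} [MulAction G X]
    (τ : X → X) : Prop :=
  (∀ (g : G) (z : X), τ (g • z) = g • τ z) ∧
  ∃ x y : X, MulAction.orbit G x ≠ MulAction.orbit G y ∧
    ({p : X × X | τ p.1 = τ p.2} =
      {p : X × X | p.1 = p.2} ∪
      {p : X × X | ∃ g : G, p = (g • x, g • y) ∨ p = (g • y, g • x)} ∪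
      {p : X × X | ∃ g h : G, p = (g • x, h • x) ∧ h⁻¹ * g ∈ MulAction.stabilizer G y}) ∧
    {z : X | τ z = z} = Set.univ \ MulAction.orbit G x

lemma collapseMap_not_mem {G : Type*} [Group G] {X : Type*} [MulAction G X]
    {x : X} (y : X) {z : X} (hz : z ∉ MulAction.orbit G x) : collapseMap G x y z = z := by
  simp [collapseMap, hz]

lemma collapseMap_smul {G : Type*} [Group G] {X : Type*} [MulAction G X]
    {x y : X} (hst : MulAction.stabilizer G x ≤ MulAction.stabilizer G y) (g : G) :
    collapseMap G x y (g • x) = g • y := by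
  have h : g • x ∈ MulAction.orbit G x := MulAction.mem_orbit _ _
  have hg' : (MulAction.mem_orbit_iff.mp h).choose • x = g • x :=
    (MulAction.mem_orbit_iff.mp h).choose_spec
  set g' := (MulAction.mem_orbit_iff.mp h).choose with hg'def
  have hx : (g⁻¹ * g') ∈ MulAction.stabilizer G x := by
    rw [MulAction.mem_stabilizer_iff, mul_smul, hg', inv_smul_smul]
  have hy := hst hx
  rw [MulAction.mem_stabilizer_iff, mul_smul] at hy
  have : g' • y = g • y := by
    calc g' • y = g • (g⁻¹ • (g' • y)) := by rw [smul_inv_smul]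
    _ = g • y := by rw [hy]
  simp only [collapseMap, dif_pos h]
  exact this

lemma smul_not_mem_orbit {G : Type*} [Group G] {X : Type*} [MulAction G X]
    {x y : X} (hy : y ∉ MulAction.orbit G x) (g : G) : g • y ∉ MulAction.orbit G x := by
  intro h
  obtain ⟨k, hk⟩ := h
  have hk' : k • x = g • y := hk
  exact hy ⟨g⁻¹ * k, show (g⁻¹ * k) • x = y by rw [mul_smul, hk', inv_smul_smul]⟩

/-- a `G`-equivariant map `τ : X → X` is a fixing elementary
collapsing if and only if there exist `x, y ∈ X` with `G_x ⊆ G_y` and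
`Gx ≠ Gy` such that `τ = [x↦y]`. -/
theorem isFixingElemCollapsing_iff
    {G : Type*} [Group G] {X : Type*} [MulAction G X] (τ : X → X)
    (hτ : ∀ (g : G) (z : X), τ (g • z) = g • τ z) :
    IsFixingElemCollapsing G τ ↔
      ∃ x y : X, MulAction.stabilizer G x ≤ MulAction.stabilizer G y ∧
        MulAction.orbit G x ≠ MulAction.orbit G y ∧ τ = collapseMap G x y := by
  constructor
  · rintro ⟨-, x, y, hne, hker, hfix⟩
    have hy : y ∉ MulAction.orbit G x := fun h => hne ((MulAction.orbit_eq_iff.mpr h).symm)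
    -- τ y = y
    have hty : τ y = y := by
      have : y ∈ {z : X | τ z = z} := by rw [hfix]; exact ⟨trivial, hy⟩
      exact this
    -- τ x = y
    have htx : τ x = y := by
      have hmem : ((1 : G) • x, (1 : G) • y) ∈
          ({p : X × X | p.1 = p.2} ∪
          {p : X × X | ∃ g : G, p = (g • x, g • y) ∨ p = (g • y, g • x)} ∪
          {p : X × X | ∃ g h : G, p = (g • x, h • x) ∧ h⁻¹ * g ∈ MulAction.stabilizer G y}) :=
        Or.inl (Or.inr ⟨1, Or.inl rfl⟩)
      rw [← hker] at hmem
      simp only [Set.mem_setOf_eq, one_smul] at hmem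
      rw [hmem, hty]
    have hst : MulAction.stabilizer G x ≤ MulAction.stabilizer G y := by
      intro g hg
      rw [MulAction.mem_stabilizer_iff] at hg ⊢
      have := hτ g x
      rw [hg, htx] at this
      exact this.symm
    refine ⟨x, y, hst, hne, ?_⟩
    funext z
    by_cases hz : z ∈ MulAction.orbit G x
    · obtain ⟨g, hg⟩ := hz
      rw [← hg, collapseMap_smul hst, hτ, htx]
    · rw [collapseMap_not_mem y hz]
      have : z ∈ {z : X | τ z = z} := by rw [hfix]; exact ⟨trivial, hz⟩
      exact this
  · rintro ⟨x, y, hst, hne, rfl⟩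
    have hy : y ∉ MulAction.orbit G x := fun h => hne ((MulAction.orbit_eq_iff.mpr h).symm)
    have hxy : x ≠ y := fun h => hy (h ▸ MulAction.mem_orbit_self x)
    refine ⟨hτ, x, y, hne, ?_, ?_⟩
    · ext ⟨a, b⟩
      simp only [Set.mem_setOf_eq, Set.mem_union]
      constructor
      · intro hab
        by_cases ha : a ∈ MulAction.orbit G x <;> by_cases hb : b ∈ MulAction.orbit G x
        · obtain ⟨g, hg⟩ := ha; obtain ⟨h, hh⟩ := hb
          rw [← hg, ← hh, collapseMap_smul hst, collapseMap_smul hst] at hab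
          refine Or.inr ⟨g, h, by rw [← hg, ← hh], ?_⟩
          rw [MulAction.mem_stabilizer_iff, mul_smul, hab, inv_smul_smul]
        · obtain ⟨g, hg⟩ := ha
          rw [← hg, collapseMap_smul hst, collapseMap_not_mem y hb] at hab
          exact Or.inl (Or.inr ⟨g, Or.inl (by rw [← hg, ← hab])⟩)
        · obtain ⟨h, hh⟩ := hb
          rw [← hh, collapseMap_smul hst, collapseMap_not_mem y ha] at hab
          exact Or.inl (Or.inr ⟨h, Or.inr (by rw [← hh, hab])⟩)
        · rw [collapseMap_not_mem y ha, collapseMap_not_mem y hb] at hab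
          exact Or.inl (Or.inl hab)
      · rintro ((heq | ⟨g, hp | hp⟩) | ⟨g, h, hp, hgh⟩)
        · exact congrArg _ (show a = b from heq)
        · obtain ⟨ha, hb⟩ := Prod.mk.injEq .. ▸ hp
          rw [ha, hb, collapseMap_smul hst,
            collapseMap_not_mem y (smul_not_mem_orbit hy g)]
        · obtain ⟨ha, hb⟩ := Prod.mk.injEq .. ▸ hp
          rw [ha, hb, collapseMap_smul hst,
            collapseMap_not_mem y (smul_not_mem_orbit hy g)]
        · obtain ⟨ha, hb⟩ := Prod.mk.injEq .. ▸ hp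
          rw [ha, hb, collapseMap_smul hst, collapseMap_smul hst]
          rw [MulAction.mem_stabilizer_iff, mul_smul] at hgh
          calc g • y = h • (h⁻¹ • (g • y)) := by rw [smul_inv_smul]
          _ = h • y := by rw [hgh]
    · ext z
      simp only [Set.mem_setOf_eq, Set.mem_diff, Set.mem_univ, true_and]
      constructor
      · intro hz hmem
        obtain ⟨g, hg⟩ := hmem
        rw [← hg, collapseMap_smul hst] at hz
        exact hxy (smul_left_cancel g hz.symm)
      · intro hz
        exact collapseMap_not_mem y hz
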